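/- There is an absolute constant c such that for every r and every n > c·6^r, any r-coloring of the diagonals of the n-cube (i.e., of the unordered pairs of distinct vertices of {0,1}^n) contains a monochromatic self-crossing path: three diagonals {x,y}, {y,z}, {z,w} of the same color such that {x,y} and {z,w} are both main diagonals of the same affine subcube of Q^n. -/

import Mathlib

/-- `{x, y}` and `{z, w}` are both main diagonals of one and the same affine
subcube of the `n`-cube: for some set `I` of free coordinates, `y i = 1 - x i` and
`w i = 1 - z i` for `i ∈ I`, while outside `I` all four points agree. -/
def MainDiagonalsSameSubcube (n : ℕ) (x y z w : Fin n → Bool) : Prop :=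
  ∃ I : Finset (Fin n),
    (∀ i ∈ I, y i = !x i ∧ w i = !z i) ∧
    (∀ i ∉ I, x i = y i ∧ z i = w i ∧ x i = z i)

namespace SCPaux

open Finset

variable {n : ℕ}

/-- pointwise xor -/
def xo (x y : Fin n → Bool) : Fin n → Bool := fun i => xor (x i) (y i)

/-- indicator -/
def ind (T : Finset (Fin n)) : Fin n → Bool := fun i => decide (i ∈ T)

/-- support -/
def supp (d : Fin n → Bool) : Finset (Fin n) := Finset.univ.filter (fun i => d i = true)

lemma mem_supp {d : Fin n → Bool} {i : Fin n} : i ∈ supp d ↔ d i = true := by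
  simp [supp]

lemma supp_ind (T : Finset (Fin n)) : supp (ind T) = T := by
  ext i; simp [supp, ind]

lemma ind_supp (d : Fin n → Bool) : ind (supp d) = d := by
  funext i; by_cases h : d i = true <;> simp [ind, mem_supp, h]

lemma xo_xo (x d : Fin n → Bool) : xo x (xo x d) = d := by
  funext i; simp [xo]

lemma xo_left_cancel {x d d' : Fin n → Bool} (h : xo x d = xo x d') : d = d' := by
  rw [← xo_xo x d, h, xo_xo]

lemma xo_eq_iff {x z d : Fin n → Bool} : xo x d = z ↔ d = xo x z := by
  constructor
  · intro h; rw [← h, xo_xo]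
  · intro h; rw [h, xo_xo]

lemma supp_xo_subset_iff {x z : Fin n → Bool} {S : Finset (Fin n)} :
    supp (xo x z) ⊆ S ↔ ∀ i, i ∉ S → x i = z i := by
  constructor
  · intro h i hi
    by_contra hne
    have : xor (x i) (z i) = true := by
      cases hx : x i <;> cases hz : z i <;> simp_all
    exact hi (h (mem_supp.mpr this))
  · intro h i hi
    rw [mem_supp] at hi
    by_contra hiS
    have := h i hiS
    simp [xo, this] at hi

lemma xo_ne_self {x d : Fin n → Bool} {i : Fin n} (h : d i = true) : xo x d ≠ x := by
  intro he
  have := congrFun he i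
  simp [xo, h] at this

/-- exists element achieving at least the average (in product form) -/
lemma exists_ge_avg {γ : Type*} (G : Finset γ) (f : γ → ℕ) (hG : G.Nonempty) :
    ∃ T ∈ G, ∑ x ∈ G, f x ≤ G.card * f T := by
  obtain ⟨T, hT, hmax⟩ := G.exists_max_image f hG
  refine ⟨T, hT, ?_⟩
  calc ∑ x ∈ G, f x ≤ ∑ _x ∈ G, f T := Finset.sum_le_sum (fun i hi => hmax i hi)
  _ = G.card * f T := by rw [Finset.sum_const, smul_eq_mul]

/-- pigeonhole into fibers -/
lemma exists_big_fiber {α β : Type*} [DecidableEq α] [DecidableEq β] (B : Finset α) (g : α → β)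
    (U : Finset β) (hmap : ∀ x ∈ B, g x ∈ U) (hU : U.Nonempty) :
    ∃ b ∈ U, B.card ≤ U.card * (B.filter (fun x => g x = b)).card := by
  have h1 : B.card = ∑ b ∈ U, (B.filter (fun x => g x = b)).card :=
    Finset.card_eq_sum_card_fiberwise hmap
  obtain ⟨b, hb, hle⟩ := exists_ge_avg U (fun b => (B.filter (fun x => g x = b)).card) hU
  exact ⟨b, hb, h1 ▸ hle⟩

lemma count_pairs (A : Finset (Fin n → Bool)) (S : Finset (Fin n)) :
    A.card ^ 2 ≤ 2 ^ (n - S.card) *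
      ∑ T ∈ S.powerset, (A.filter (fun x => xo x (ind T) ∈ A)).card := by
  classical
  set π : (Fin n → Bool) → (Fin n → Bool) := fun x i => if i ∈ S then false else x i with hπ
  have pi_eq_iff : ∀ x z : Fin n → Bool, (π z = π x ↔ supp (xo x z) ⊆ S) := by
    intro x z
    rw [supp_xo_subset_iff]
    constructor
    · intro h i hi
      have h2 := congrFun h i
      simp only [hπ] at h2
      rw [if_neg hi, if_neg hi] at h2
      exact h2.symm
    · intro h
      funext i
      simp only [hπ]
      by_cases hi : i ∈ S
      · rw [if_pos hi, if_pos hi]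
      · rw [if_neg hi, if_neg hi, h i hi]
  -- step 2 : rewrite the double counting
  have step2 : ∑ T ∈ S.powerset, (A.filter (fun x => xo x (ind T) ∈ A)).card
      = ∑ x ∈ A, (A.filter (fun z => π z = π x)).card := by
    have lhs : ∑ T ∈ S.powerset, (A.filter (fun x => xo x (ind T) ∈ A)).card
        = ∑ T ∈ S.powerset, ∑ x ∈ A, (if xo x (ind T) ∈ A then 1 else 0) := by
      refine Finset.sum_congr rfl fun T _ => ?_
      rw [Finset.card_filter]
    rw [lhs, Finset.sum_comm]
    refine Finset.sum_congr rfl fun x hx => ?_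
    rw [← Finset.card_filter]
    -- bijection T ↦ xo x (ind T)
    refine Finset.card_bij (fun T _ => xo x (ind T)) ?_ ?_ ?_
    · intro T hT
      rw [Finset.mem_filter] at hT ⊢
      refine ⟨hT.2, ?_⟩
      rw [pi_eq_iff]
      rw [xo_xo, supp_ind]
      exact Finset.mem_powerset.mp hT.1
    · intro T1 h1 T2 h2 he
      have : ind T1 = ind (n := n) T2 := by
        have := congrArg (xo x) he
        rwa [xo_xo, xo_xo] at this
      have := congrArg supp this
      rwa [supp_ind, supp_ind] at this
    · intro z hz
      rw [Finset.mem_filter, pi_eq_iff] at hz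
      refine ⟨supp (xo x z), ?_, ?_⟩
      · rw [Finset.mem_filter]
        refine ⟨Finset.mem_powerset.mpr hz.2, ?_⟩
        rw [ind_supp, xo_xo]
        exact hz.1
      · show xo x (ind (supp (xo x z))) = z
        rw [ind_supp, xo_xo]
  rw [step2]
  -- step 3: fibers
  have step3 : ∑ x ∈ A, (A.filter (fun z => π z = π x)).card
      = ∑ y ∈ A.image π, ((A.filter (fun z => π z = y)).card) ^ 2 := by
    have := Finset.sum_comp (s := A) (fun y => (A.filter (fun z => π z = y)).card) π
    rw [this]
    refine Finset.sum_congr rfl fun y _ => ?_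
    rw [smul_eq_mul, sq]
  rw [step3]
  have hcardA : A.card = ∑ y ∈ A.image π, (A.filter (fun z => π z = y)).card := by
    simpa using Finset.card_eq_sum_card_image π A
  have cs := sq_sum_le_card_mul_sum_sq
    (s := A.image π) (f := fun y => ((A.filter (fun z => π z = y)).card : ℕ))
  have himg : (A.image π).card ≤ 2 ^ (n - S.card) := by
    have hmaps : ∀ y ∈ A.image π, supp y ∈ Sᶜ.powerset := by
      intro y hy
      obtain ⟨x, _, rfl⟩ := Finset.mem_image.mp hy
      rw [Finset.mem_powerset]
      intro i hi
      rw [mem_supp] at hi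
      rw [Finset.mem_compl]
      intro hiS
      simp only [hπ] at hi
      rw [if_pos hiS] at hi
      exact Bool.false_ne_true hi
    have hinj : Set.InjOn supp ((A.image π : Finset (Fin n → Bool)) : Set (Fin n → Bool)) := by
      intro a _ b _ hab
      have := congrArg ind hab
      rwa [ind_supp, ind_supp] at this
    calc (A.image π).card ≤ Sᶜ.powerset.card := Finset.card_le_card_of_injOn supp hmaps hinj
    _ = 2 ^ (n - S.card) := by
        rw [Finset.card_powerset, Finset.card_compl]
        simp
  calc A.card ^ 2 = (∑ y ∈ A.image π, (A.filter (fun z => π z = y)).card) ^ 2 := by rw [hcardA]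
  _ ≤ (A.image π).card * ∑ y ∈ A.image π, ((A.filter (fun z => π z = y)).card) ^ 2 := cs
  _ ≤ 2 ^ (n - S.card) * ∑ y ∈ A.image π, ((A.filter (fun z => π z = y)).card) ^ 2 :=
      Nat.mul_le_mul_right _ himg

lemma badcount {n : ℕ} (S : Finset (Fin n)) :
    (S.powerset.filter (fun T => ¬(2*S.card/5 < T.card ∧ T ≠ S))).card
        * 2 ^ (S.card - 2*S.card/5) ≤ 2 * 3 ^ S.card := by
  classical
  set s := S.card with hs
  set t := 2*s/5 with ht
  have hts : t ≤ s := by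
    calc t ≤ 2*s/2 := by
          apply Nat.div_le_div_left <;> omega
    _ = s := by omega
  set small := S.powerset.filter (fun T => T.card ≤ t) with hsmall
  have hsub : S.powerset.filter (fun T => ¬(2*s/5 < T.card ∧ T ≠ S))
      ⊆ small ∪ {S} := by
    intro T hT
    rw [Finset.mem_filter] at hT
    rw [Finset.mem_union, Finset.mem_singleton, hsmall, Finset.mem_filter]
    rcases Decidable.not_and_iff_or_not.mp hT.2 with h | h
    · exact Or.inl ⟨hT.1, by omega⟩
    · exact Or.inr (not_not.mp h)
  have hcard1 : (S.powerset.filter (fun T => ¬(2*s/5 < T.card ∧ T ≠ S))).card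
      ≤ small.card + 1 := by
    calc _ ≤ (small ∪ {S}).card := Finset.card_le_card hsub
    _ ≤ small.card + ({S} : Finset (Finset (Fin n))).card := Finset.card_union_le _ _
    _ = small.card + 1 := by rw [Finset.card_singleton]
  have hsmallcard : small.card = ∑ j ∈ Finset.range (t+1), s.choose j := by
    rw [hsmall]
    rw [Finset.card_eq_sum_card_fiberwise
      (f := fun T => T.card) (t := Finset.range (t+1))
      (by intro T hT
          rw [Finset.mem_coe, Finset.mem_filter] at hT
          simp only [Finset.mem_coe, Finset.mem_range, Nat.lt_succ_iff]
          exact hT.2)]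
    refine Finset.sum_congr rfl fun j hj => ?_
    rw [Finset.mem_range] at hj
    have : ((S.powerset.filter (fun T => T.card ≤ t)).filter (fun T => T.card = j))
        = S.powersetCard j := by
      ext T
      rw [Finset.mem_filter, Finset.mem_filter, Finset.mem_powersetCard, Finset.mem_powerset]
      constructor
      · rintro ⟨⟨h1, _⟩, h3⟩; exact ⟨h1, h3⟩
      · rintro ⟨h1, h2⟩; exact ⟨⟨h1, by omega⟩, h2⟩
    rw [this, Finset.card_powersetCard]
  have key : small.card * 2 ^ (s - t) ≤ 3 ^ s := by
    rw [hsmallcard, Finset.sum_mul]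
    have h3 : (3:ℕ) ^ s = ∑ j ∈ Finset.range (s+1), s.choose j * 2 ^ (s - j) := by
      have := add_pow (1:ℕ) 2 s
      simp only [one_pow, one_mul] at this
      norm_num at this
      rw [this]
      refine Finset.sum_congr rfl fun j _ => ?_
      ring
    rw [h3]
    calc ∑ j ∈ Finset.range (t+1), s.choose j * 2 ^ (s - t)
        ≤ ∑ j ∈ Finset.range (t+1), s.choose j * 2 ^ (s - j) := by
          apply Finset.sum_le_sum
          intro j hj
          rw [Finset.mem_range] at hj
          have h2 : 2 ^ (s - t) ≤ 2 ^ (s - j) := Nat.pow_le_pow_right (by norm_num) (by omega)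
          exact Nat.mul_le_mul_left _ h2
    _ ≤ ∑ j ∈ Finset.range (s+1), s.choose j * 2 ^ (s - j) :=
          Finset.sum_le_sum_of_subset (Finset.range_subset_range.mpr (by omega))
  calc (S.powerset.filter (fun T => ¬(2*s/5 < T.card ∧ T ≠ S))).card * 2 ^ (s - t)
      ≤ (small.card + 1) * 2 ^ (s - t) := Nat.mul_le_mul_right _ hcard1
  _ = small.card * 2 ^ (s - t) + 2 ^ (s - t) := by ring
  _ ≤ 3 ^ s + 3 ^ s := by
      refine Nat.add_le_add key ?_
      calc (2:ℕ) ^ (s - t) ≤ 2 ^ s := Nat.pow_le_pow_right (by norm_num) (by omega)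
      _ ≤ 3 ^ s := Nat.pow_le_pow_left (by norm_num) _
  _ = 2 * 3 ^ s := by ring

lemma aux_growth : ∀ r : ℕ, 5 ^ r * (r + 1) ≤ 7 * 6 ^ r := by
  intro r
  induction r with
  | zero => norm_num
  | succ r ih =>
    have h5 : (5:ℕ) ^ r ≤ 6 ^ r := Nat.pow_le_pow_left (by norm_num) _
    calc 5 ^ (r+1) * (r+1+1) = 5 * (5 ^ r * (r+1)) + 5 * 5 ^ r := by ring
    _ ≤ 5 * (7 * 6 ^ r) + 5 * 6 ^ r := by
        exact Nat.add_le_add (Nat.mul_le_mul_left _ ih) (Nat.mul_le_mul_left _ h5)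
    _ = 40 * 6 ^ r := by ring
    _ ≤ 42 * 6 ^ r := Nat.mul_le_mul_right _ (by norm_num)
    _ = 7 * 6 ^ (r+1) := by ring

lemma numeric {r k n s : ℕ} (hk : k ≤ r) (hn : 1000 * 6 ^ r < n)
    (hs : 2 ^ k * n ≤ 5 ^ k * s) :
    1024 * (2*r) ^ (5 * 2 ^ k) * 243 ^ s ≤ 256 ^ s := by
  set Q := 10 + 5 * 2 ^ k * (r + 1) with hQ
  have claim1 : 5 ^ k * (14 * Q) ≤ 2 ^ k * n := by
    have h1 : (5:ℕ) ^ k ≤ 6 ^ r :=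
      le_trans (Nat.pow_le_pow_left (by norm_num) k |>.trans (Nat.pow_le_pow_right (by norm_num) hk)) (le_refl _)
    have h2 : 5 ^ k * (r + 1) ≤ 7 * 6 ^ r := by
      calc 5 ^ k * (r+1) ≤ 5 ^ r * (r+1) :=
            Nat.mul_le_mul_right _ (Nat.pow_le_pow_right (by norm_num) hk)
      _ ≤ 7 * 6 ^ r := aux_growth r
    have h2k : (1:ℕ) ≤ 2 ^ k := Nat.one_le_two_pow
    calc 5 ^ k * (14 * Q) = 140 * 5 ^ k + 70 * 2 ^ k * (5 ^ k * (r+1)) := by rw [hQ]; ring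
    _ ≤ 140 * 6 ^ r + 70 * 2 ^ k * (7 * 6 ^ r) := by
        exact Nat.add_le_add (Nat.mul_le_mul_left _ h1)
          (Nat.mul_le_mul_left _ h2)
    _ ≤ 140 * (2 ^ k * 6 ^ r) + 490 * (2 ^ k * 6 ^ r) := by
        refine Nat.add_le_add ?_ (le_of_eq (by ring))
        calc 140 * 6 ^ r = 140 * (1 * 6 ^ r) := by ring
        _ ≤ 140 * (2 ^ k * 6 ^ r) := by
            exact Nat.mul_le_mul_left _ (Nat.mul_le_mul_right _ h2k)
    _ = 630 * (2 ^ k * 6 ^ r) := by ring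
    _ ≤ 2 ^ k * (1000 * 6 ^ r) := by
        calc 630 * (2 ^ k * 6 ^ r) = 2 ^ k * (630 * 6 ^ r) := by ring
        _ ≤ 2 ^ k * (1000 * 6 ^ r) := by
            refine Nat.mul_le_mul_left _ (Nat.mul_le_mul_right _ (by norm_num))
    _ ≤ 2 ^ k * n := Nat.mul_le_mul_left _ (le_of_lt hn)
  have hsQ : 14 * Q ≤ s := by
    have := le_trans claim1 hs
    exact Nat.le_of_mul_le_mul_left this (by positivity : 0 < 5 ^ k)
  set q := s / 14 with hq
  have hqQ : Q ≤ q := by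
    rw [hq]
    rw [Nat.le_div_iff_mul_le (by norm_num)]
    omega
  have hsplit : 256 ^ s = (256 ^ 14) ^ q * 256 ^ (s % 14) := by
    rw [← pow_mul, ← pow_add]
    congr 1
    omega
  have hstep : 2 ^ q * 243 ^ s ≤ 256 ^ s := by
    have h14 : (2 * 243 ^ 14 : ℕ) ≤ 256 ^ 14 := by norm_num
    have h243s : (243:ℕ) ^ s = (243 ^ 14) ^ q * 243 ^ (s % 14) := by
      rw [← pow_mul, ← pow_add]
      congr 1
      omega
    rw [hsplit, h243s]
    calc 2 ^ q * ((243 ^ 14) ^ q * 243 ^ (s % 14))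
        = (2 * 243 ^ 14 : ℕ) ^ q * 243 ^ (s % 14) := by rw [mul_pow]; ring
    _ ≤ (256 ^ 14) ^ q * 256 ^ (s % 14) := by
        exact Nat.mul_le_mul (Nat.pow_le_pow_left h14 _)
          (Nat.pow_le_pow_left (by norm_num) _)
  have hsmall : 1024 * (2*r) ^ (5 * 2 ^ k) ≤ 2 ^ q := by
    have hr2 : 2 * r ≤ 2 ^ (r + 1) := by
      have : r ≤ 2 ^ r := Nat.le_of_lt (Nat.lt_two_pow_self)
      calc 2 * r ≤ 2 * 2 ^ r := Nat.mul_le_mul_left _ this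
      _ = 2 ^ (r+1) := by ring
    calc 1024 * (2*r) ^ (5 * 2 ^ k) ≤ 2 ^ 10 * (2 ^ (r+1)) ^ (5 * 2 ^ k) := by
          exact Nat.mul_le_mul (by norm_num) (Nat.pow_le_pow_left hr2 _)
    _ = 2 ^ (10 + (r+1) * (5 * 2 ^ k)) := by rw [← pow_mul, ← pow_add]
    _ = 2 ^ Q := by rw [hQ]; ring_nf
    _ ≤ 2 ^ q := Nat.pow_le_pow_right (by norm_num) hqQ
  calc 1024 * (2*r) ^ (5 * 2 ^ k) * 243 ^ s ≤ 2 ^ q * 243 ^ s :=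
        Nat.mul_le_mul_right _ hsmall
  _ ≤ 256 ^ s := hstep

lemma select (A : Finset (Fin n → Bool)) (S : Finset (Fin n))
    (hApos : 0 < A.card)
    (hA : 2 ^ (n - S.card + 1) *
        (S.powerset.filter (fun T => ¬(2*S.card/5 < T.card ∧ T ≠ S))).card ≤ A.card) :
    ∃ T, T ⊆ S ∧ T ≠ S ∧ 2*S.card/5 < T.card ∧
      A.card ^ 2 ≤ 2 ^ (n+1) * (A.filter (fun x => xo x (ind T) ∈ A)).card := by
  classical
  set s := S.card with hs
  have hsn : s ≤ n := by
    rw [hs]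
    calc S.card ≤ Finset.univ.card := Finset.card_le_univ S
    _ = n := by simp
  set f : Finset (Fin n) → ℕ := fun T => (A.filter (fun x => xo x (ind T) ∈ A)).card with hf
  set p : Finset (Fin n) → Prop := fun T => (2*s/5 < T.card ∧ T ≠ S) with hp
  have hsplit : ∑ T ∈ S.powerset.filter p, f T + ∑ T ∈ S.powerset.filter (fun T => ¬ p T), f T
      = ∑ T ∈ S.powerset, f T := Finset.sum_filter_add_sum_filter_not _ _ _
  have hbadsum : ∑ T ∈ S.powerset.filter (fun T => ¬ p T), f T
      ≤ (S.powerset.filter (fun T => ¬ p T)).card * A.card := by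
    calc ∑ T ∈ S.powerset.filter (fun T => ¬ p T), f T
        ≤ ∑ _T ∈ S.powerset.filter (fun T => ¬ p T), A.card :=
          Finset.sum_le_sum (fun T _ => Finset.card_filter_le _ _)
    _ = (S.powerset.filter (fun T => ¬ p T)).card * A.card := by
        rw [Finset.sum_const, smul_eq_mul]
  -- main inequality: A.card^2 ≤ 2^(n-s+1) * good sum
  have hmain : A.card ^ 2 ≤ 2 ^ (n - s + 1) * ∑ T ∈ S.powerset.filter p, f T := by
    have h1 : A.card ^ 2 ≤ 2 ^ (n - s) * ∑ T ∈ S.powerset, f T := count_pairs A S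
    have h2 : 2 * A.card ^ 2 ≤
        2 ^ (n - s + 1) * ∑ T ∈ S.powerset.filter p, f T
        + 2 ^ (n - s + 1) * ((S.powerset.filter (fun T => ¬ p T)).card * A.card) := by
      calc 2 * A.card ^ 2 ≤ 2 * (2 ^ (n - s) * ∑ T ∈ S.powerset, f T) :=
            Nat.mul_le_mul_left _ h1
      _ = 2 ^ (n - s + 1) * (∑ T ∈ S.powerset.filter p, f T
            + ∑ T ∈ S.powerset.filter (fun T => ¬ p T), f T) := by
          rw [hsplit]; ring
      _ ≤ _ := by
          rw [Nat.mul_add]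
          exact Nat.add_le_add_left (Nat.mul_le_mul_left _ hbadsum) _
    have h3 : 2 ^ (n - s + 1) * ((S.powerset.filter (fun T => ¬ p T)).card * A.card)
        ≤ A.card * A.card := by
      rw [← mul_assoc]
      exact Nat.mul_le_mul_right _ hA
    have h4 : A.card * A.card = A.card ^ 2 := (sq A.card).symm
    omega
  -- good set nonempty
  have hgoodpos : 0 < ∑ T ∈ S.powerset.filter p, f T := by
    rcases Nat.eq_zero_or_pos (∑ T ∈ S.powerset.filter p, f T) with h | h
    · rw [h, Nat.mul_zero] at hmain
      have h2 : 0 < A.card ^ 2 := pow_pos hApos 2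
      omega
    · exact h
  have hne : (S.powerset.filter p).Nonempty := by
    rw [Finset.nonempty_iff_ne_empty]
    intro h
    rw [h, Finset.sum_empty] at hgoodpos
    exact lt_irrefl 0 hgoodpos
  obtain ⟨T, hT, havg⟩ := exists_ge_avg (S.powerset.filter p) f hne
  rw [Finset.mem_filter, Finset.mem_powerset] at hT
  refine ⟨T, hT.1, hT.2.2, hT.2.1, ?_⟩
  have hgc : (S.powerset.filter p).card ≤ 2 ^ s := by
    calc (S.powerset.filter p).card ≤ S.powerset.card := Finset.card_filter_le _ _
    _ = 2 ^ s := by rw [Finset.card_powerset]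
  calc A.card ^ 2 ≤ 2 ^ (n - s + 1) * ∑ T ∈ S.powerset.filter p, f T := hmain
  _ ≤ 2 ^ (n - s + 1) * ((S.powerset.filter p).card * f T) := Nat.mul_le_mul_left _ havg
  _ ≤ 2 ^ (n - s + 1) * (2 ^ s * f T) :=
      Nat.mul_le_mul_left _ (Nat.mul_le_mul_right _ hgc)
  _ = (2 ^ (n - s + 1) * 2 ^ s) * f T := by ring
  _ = 2 ^ (n + 1) * f T := by
      rw [← pow_add]
      congr 2
      omega

lemma advance {r : ℕ} (hr : 0 < r) (k : ℕ) (hk : k ≤ r) (hn : 1000 * 6 ^ r < n)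
    (S : Finset (Fin n)) (A : Finset (Fin n → Bool))
    (hS : 2 ^ k * n ≤ 5 ^ k * S.card) (hA : 2 ^ n ≤ A.card * (2*r) ^ (2 ^ k - 1)) :
    ∃ T, T ⊆ S ∧ T ≠ S ∧ 2*S.card/5 < T.card ∧ T.Nonempty ∧
      A.card ^ 2 ≤ 2 ^ (n+1) * (A.filter (fun x => xo x (ind T) ∈ A)).card ∧
      (A.filter (fun x => xo x (ind T) ∈ A)).Nonempty := by
  classical
  set s := S.card with hs
  set t := 2*s/5 with ht
  set e := 2 ^ k - 1 with he
  set bad := (S.powerset.filter (fun T => ¬(2*s/5 < T.card ∧ T ≠ S))).card with hbad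
  have hsn : s ≤ n := by
    rw [hs]
    calc S.card ≤ Finset.univ.card := Finset.card_le_univ S
    _ = n := by simp
  have hts : t ≤ s := by
    rw [ht]
    calc 2*s/5 ≤ 2*s/2 := Nat.div_le_div_left (by norm_num) (by norm_num)
    _ = s := by omega
  have h5t : 5 * t ≤ 2 * s := by
    rw [ht]
    calc 5 * (2*s/5) = (2*s/5) * 5 := by ring
    _ ≤ 2 * s := Nat.div_mul_le_self _ _
  have hApos : 0 < A.card := by
    rcases Nat.eq_zero_or_pos A.card with h | h
    · rw [h, Nat.zero_mul] at hA
      have h2 : 0 < 2 ^ n := by positivity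
      omega
    · exact h
  have h2r : (1:ℕ) ≤ 2*r := by omega
  have hbad2 : bad * 2 ^ (s - t) ≤ 2 * 3 ^ s := badcount S
  have hnum : 1024 * (2*r) ^ (5 * 2 ^ k) * 243 ^ s ≤ 256 ^ s := numeric hk hn hS
  -- step A
  have stepA : 4 * 3 ^ s * (2*r) ^ (2 ^ k) ≤ 2 ^ s * 2 ^ (s - t) := by
    have h5 : (4 * 3 ^ s * (2*r) ^ (2 ^ k)) ^ 5 ≤ (2 ^ s * 2 ^ (s - t)) ^ 5 := by
      have e1 : ((3:ℕ) ^ s) ^ 5 = 243 ^ s := by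
        rw [← pow_mul, mul_comm, pow_mul]
        norm_num
      have e2 : (((2*r):ℕ) ^ (2 ^ k)) ^ 5 = (2*r) ^ (5 * 2 ^ k) := by
        rw [← pow_mul, Nat.mul_comm (2^k) 5]
      have lhs5 : (4 * 3 ^ s * (2*r) ^ (2 ^ k)) ^ 5
          = 1024 * (2*r) ^ (5 * 2 ^ k) * 243 ^ s := by
        calc (4 * 3 ^ s * (2*r) ^ (2 ^ k)) ^ 5
            = 4 ^ 5 * ((3 ^ s) ^ 5) * (((2*r)) ^ (2 ^ k)) ^ 5 := by ring
        _ = 1024 * (2*r) ^ (5 * 2 ^ k) * 243 ^ s := by rw [e1, e2]; norm_num; ring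
      have rhs5 : (2:ℕ) ^ (8*s) ≤ (2 ^ s * 2 ^ (s - t)) ^ 5 := by
        rw [← pow_add, ← pow_mul]
        exact Nat.pow_le_pow_right (by norm_num) (by omega)
      calc (4 * 3 ^ s * (2*r) ^ (2 ^ k)) ^ 5 = 1024 * (2*r) ^ (5 * 2 ^ k) * 243 ^ s := lhs5
      _ ≤ 256 ^ s := hnum
      _ = 2 ^ (8*s) := by rw [show (256:ℕ) = 2^8 by norm_num, ← pow_mul]
      _ ≤ (2 ^ s * 2 ^ (s - t)) ^ 5 := rhs5
    exact (Nat.pow_le_pow_iff_left (by norm_num)).mp h5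
  -- step B
  have stepB : 2 * bad * (2*r) ^ e ≤ 2 ^ s := by
    have h1 : (2 * bad * (2*r) ^ e) * 2 ^ (s - t) ≤ (2 ^ s) * 2 ^ (s - t) := by
      calc (2 * bad * (2*r) ^ e) * 2 ^ (s - t)
          = 2 * (bad * 2 ^ (s - t)) * (2*r) ^ e := by ring
      _ ≤ 2 * (2 * 3 ^ s) * (2*r) ^ e :=
          Nat.mul_le_mul_right _ (Nat.mul_le_mul_left _ hbad2)
      _ = 4 * 3 ^ s * (2*r) ^ e := by ring
      _ ≤ 4 * 3 ^ s * (2*r) ^ (2 ^ k) :=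
          Nat.mul_le_mul_left _ (Nat.pow_le_pow_right h2r (he ▸ Nat.sub_le _ _))
      _ ≤ 2 ^ s * 2 ^ (s - t) := stepA
    exact Nat.le_of_mul_le_mul_right h1 (by positivity)
  -- step C
  have stepC : 2 ^ (n - s + 1) * bad ≤ A.card := by
    have h1 : (2 ^ (n - s + 1) * bad) * (2*r) ^ e ≤ A.card * (2*r) ^ e := by
      calc (2 ^ (n - s + 1) * bad) * (2*r) ^ e
          = 2 ^ (n - s) * (2 * bad * (2*r) ^ e) := by
            rw [pow_succ]
            ring
      _ ≤ 2 ^ (n - s) * 2 ^ s := Nat.mul_le_mul_left _ stepB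
      _ = 2 ^ n := by rw [← pow_add]; congr 1; omega
      _ ≤ A.card * (2*r) ^ e := hA
    exact Nat.le_of_mul_le_mul_right h1 (by positivity)
  obtain ⟨T, hT1, hT2, hT3, hT4⟩ := select A S hApos stepC
  have hTne : T.Nonempty := Finset.card_pos.mp (by omega)
  refine ⟨T, hT1, hT2, hT3, hTne, hT4, ?_⟩
  rw [← Finset.card_pos]
  rcases Nat.eq_zero_or_pos (A.filter (fun x => xo x (ind T) ∈ A)).card with h | h
  · rw [h, Nat.mul_zero] at hT4
    have : 0 < A.card ^ 2 := pow_pos hApos 2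
    omega
  · exact h

lemma xo_comm (x z : Fin n → Bool) : xo x z = xo z x := by
  funext i; simp [xo, Bool.xor_comm]

lemma key (r n : ℕ) (hr : 0 < r) (hn : 1000 * 6 ^ r < n)
    (χ : Sym2 (Fin n → Bool) → Fin r)
    (hno : ∀ x y z w : Fin n → Bool, x ≠ y → y ≠ z → z ≠ w → x ≠ z → y ≠ w →
      MainDiagonalsSameSubcube n x y z w →
      χ s(x, y) = χ s(y, z) → χ s(y, z) = χ s(z, w) → False) : False := by
  classical
  have claim : ∀ k, k ≤ r → ∃ (S : Finset (Fin n)) (A : Finset (Fin n → Bool))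
      (used : Finset (Fin r)),
      used.card = k ∧ 2 ^ k * n ≤ 5 ^ k * S.card ∧
      2 ^ n ≤ A.card * (2*r) ^ (2 ^ k - 1) ∧
      (∀ x ∈ A, ∀ z ∈ A, x ≠ z → supp (xo x z) ⊆ S → xo x z ≠ ind S →
        χ s(x, z) ∉ used) := by
    intro k
    induction k with
    | zero =>
      intro _
      refine ⟨Finset.univ, Finset.univ, ∅, rfl, by simp, ?_, by simp⟩
      have hcard : (Finset.univ : Finset (Fin n → Bool)).card = 2 ^ n := by
        rw [Finset.card_univ]
        simp
      rw [hcard]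
      simp
    | succ k ih =>
      intro hk1
      obtain ⟨S, A, used, hused, hS, hA, hinv⟩ := ih (by omega)
      obtain ⟨T, hTsub, hTneS, hTcard, hTne, hsel, hBne⟩ :=
        advance hr k (by omega) hn S A hS hA
      set B := A.filter (fun x => xo x (ind T) ∈ A) with hB
      obtain ⟨i0, hi0⟩ := hTne
      have hi0T : ind T i0 = true := by simp [ind, hi0]
      have hgcol : ∀ x ∈ B, χ s(x, xo x (ind T)) ∈ Finset.univ \ used := by
        intro x hx
        rw [hB, Finset.mem_filter] at hx
        rw [Finset.mem_sdiff]
        refine ⟨Finset.mem_univ _, ?_⟩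
        refine hinv x hx.1 (xo x (ind T)) hx.2 ?_ ?_ ?_
        · exact fun h => (xo_ne_self hi0T) h.symm
        · rw [xo_xo, supp_ind]; exact hTsub
        · rw [xo_xo]
          intro h
          have h2 := congrArg supp h
          rw [supp_ind, supp_ind] at h2
          exact hTneS h2
      have hUne : (Finset.univ \ used).Nonempty := by
        rw [← Finset.card_pos, Finset.card_sdiff_of_subset (Finset.subset_univ _)]
        have h2 : (Finset.univ : Finset (Fin r)).card = r := by simp
        omega
      obtain ⟨a, ha, hpig⟩ := exists_big_fiber B (fun x => χ s(x, xo x (ind T)))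
        (Finset.univ \ used) hgcol hUne
      set A' := B.filter (fun x => χ s(x, xo x (ind T)) = a) with hA'
      rw [Finset.mem_sdiff] at ha
      have hucard : (Finset.univ \ used).card ≤ r := by
        calc _ ≤ (Finset.univ : Finset (Fin r)).card :=
              Finset.card_le_card (Finset.sdiff_subset)
        _ = r := by simp
      have hA'sub : ∀ x ∈ A', x ∈ A := by
        intro x hx
        rw [hA', Finset.mem_filter] at hx
        rw [hB, Finset.mem_filter] at hx
        exact hx.1.1
      have hA'flip : ∀ x ∈ A', xo x (ind T) ∈ A := by
        intro x hx
        rw [hA', Finset.mem_filter] at hx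
        rw [hB, Finset.mem_filter] at hx
        exact hx.1.2
      have hA'col : ∀ x ∈ A', χ s(x, xo x (ind T)) = a := by
        intro x hx
        rw [hA', Finset.mem_filter] at hx
        exact hx.2
      refine ⟨T, A', insert a used, ?_, ?_, ?_, ?_⟩
      · rw [Finset.card_insert_of_notMem ha.2, hused]
      · have h2s : 2 * S.card < 5 * T.card := by
          have h3 := (Nat.div_lt_iff_lt_mul (by norm_num : 0 < 5)).mp hTcard
          omega
        calc 2 ^ (k+1) * n = 2 * (2 ^ k * n) := by ring
        _ ≤ 2 * (5 ^ k * S.card) := Nat.mul_le_mul_left _ hS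
        _ = 5 ^ k * (2 * S.card) := by ring
        _ ≤ 5 ^ k * (5 * T.card) := Nat.mul_le_mul_left _ (le_of_lt h2s)
        _ = 5 ^ (k+1) * T.card := by ring
      · -- cardinality invariant
        have hP1 : (1:ℕ) ≤ 2 ^ k := Nat.one_le_two_pow
        have hE : (2*r) ^ (2 ^ (k+1) - 1) = ((2*r) ^ (2 ^ k - 1))^2 * (2*r) := by
          rw [← pow_mul, ← pow_succ]
          congr 1
          rw [pow_succ]
          omega
        have chain : 2^n * 2^n ≤ 2^(n+1) * r * (A'.card * ((2*r)^(2^k-1))^2) := by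
          calc 2^n * 2^n ≤ (A.card * (2*r)^(2^k-1)) * (A.card * (2*r)^(2^k-1)) :=
                Nat.mul_le_mul hA hA
          _ = A.card^2 * ((2*r)^(2^k-1))^2 := by ring
          _ ≤ (2^(n+1) * B.card) * ((2*r)^(2^k-1))^2 := Nat.mul_le_mul_right _ hsel
          _ ≤ (2^(n+1) * ((Finset.univ \ used).card * A'.card)) * ((2*r)^(2^k-1))^2 :=
                Nat.mul_le_mul_right _ (Nat.mul_le_mul_left _ hpig)
          _ ≤ (2^(n+1) * (r * A'.card)) * ((2*r)^(2^k-1))^2 :=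
                Nat.mul_le_mul_right _ (Nat.mul_le_mul_left _ (Nat.mul_le_mul_right _ hucard))
          _ = 2^(n+1) * r * (A'.card * ((2*r)^(2^k-1))^2) := by ring
        have step : (2^(n+1) * r) * (2^n) ≤ (2^(n+1) * r) * (A'.card * (2*r)^(2^(k+1)-1)) := by
          rw [hE]
          have h2 := Nat.mul_le_mul_right (2*r) chain
          calc (2^(n+1) * r) * 2^n = (2^n * 2^n) * (2*r) := by rw [pow_succ]; ring
          _ ≤ (2^(n+1) * r * (A'.card * ((2*r)^(2^k-1))^2)) * (2*r) := h2
          _ = (2^(n+1) * r) * (A'.card * (((2*r)^(2^k-1))^2 * (2*r))) := by ring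
        exact Nat.le_of_mul_le_mul_left step (by positivity)
      · -- invariant
        intro x hx z hz hxz hsupp hne
        intro hmem
        rcases Finset.mem_insert.mp hmem with hcol | hcol
        · -- color a : build a self-crossing path
          refine hno (xo x (ind T)) x z (xo z (ind T))
            (xo_ne_self hi0T) hxz ((xo_ne_self hi0T).symm) ?_ ?_ ?_ ?_ ?_
          · intro h
            exact hne (by rw [← h, xo_xo])
          · intro h
            apply hne
            rw [xo_comm, h, xo_xo]
          · refine ⟨T, ?_, ?_⟩
            · intro i hi
              have hiT : ind T i = true := by simp [ind, hi]
              constructor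
              · show x i = !(xo x (ind T) i)
                simp [xo, hiT]
              · show xo z (ind T) i = !(z i)
                simp [xo, hiT]
            · intro i hi
              have hiT : ind T i = false := by simp [ind, hi]
              refine ⟨?_, ?_, ?_⟩
              · show xo x (ind T) i = x i
                simp [xo, hiT]
              · show z i = xo z (ind T) i
                simp [xo, hiT]
              · show xo x (ind T) i = z i
                have := supp_xo_subset_iff.mp hsupp i hi
                simp [xo, hiT, this]
          · rw [show s(xo x (ind T), x) = s(x, xo x (ind T)) from Sym2.eq_swap]
            rw [hA'col x hx, hcol]
          · rw [hcol, (hA'col z hz).symm]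
        · -- color in used : contradict old invariant
          refine hinv x (hA'sub x hx) z (hA'sub z hz) hxz (hsupp.trans hTsub) ?_ hcol
          intro h
          apply hTneS
          have h2 := congrArg supp h
          rw [supp_ind] at h2
          refine Finset.Subset.antisymm hTsub ?_
          rw [← h2]
          exact hsupp
  obtain ⟨S, A, used, hused, hS, hA, hinv⟩ := claim r le_rfl
  have husedall : used = Finset.univ := by
    apply Finset.eq_univ_of_card
    rw [hused]
    simp
  obtain ⟨T, hTsub, hTneS, hTcard, hTne, hsel, hBne⟩ := advance hr r le_rfl hn S A hS hA
  obtain ⟨x, hx⟩ := hBne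
  rw [Finset.mem_filter] at hx
  obtain ⟨i0, hi0⟩ := hTne
  have hi0T : ind T i0 = true := by simp [ind, hi0]
  have hnotin := hinv x hx.1 (xo x (ind T)) hx.2
    (fun h => (xo_ne_self hi0T) h.symm)
    (by rw [xo_xo, supp_ind]; exact hTsub)
    (by rw [xo_xo]
        intro h
        have h2 := congrArg supp h
        rw [supp_ind, supp_ind] at h2
        exact hTneS h2)
  exact hnotin (husedall ▸ Finset.mem_univ _)

end SCPaux

/-- In any `r`-coloring of the diagonals of the `n`-cube (unordered pairs of
distinct vertices of `{0,1}ⁿ`), provided `n > c * 6 ^ r` (for an absolute constant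
`c`), there is a monochromatic self-crossing path: three diagonals `{x,y}`,
`{y,z}`, `{z,w}` of the same color with `{x,y}` and `{z,w}` main diagonals of the
same affine subcube. -/
theorem monochromatic_self_crossing_path :
    ∃ c : ℕ, 0 < c ∧ ∀ r : ℕ, 0 < r → ∀ n : ℕ, c * 6 ^ r < n →
      ∀ χ : Sym2 (Fin n → Bool) → Fin r,
        ∃ x y z w : Fin n → Bool,
          x ≠ y ∧ y ≠ z ∧ z ≠ w ∧ x ≠ z ∧ y ≠ w ∧
          MainDiagonalsSameSubcube n x y z w ∧
          χ s(x, y) = χ s(y, z) ∧ χ s(y, z) = χ s(z, w) := by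
  refine ⟨1000, by norm_num, ?_⟩
  intro r hr n hn χ
  by_contra hcon
  exact SCPaux.key r n hr hn χ (fun x y z w h1 h2 h3 h4 h5 h6 hc1 hc2 =>
    hcon ⟨x, y, z, w, h1, h2, h3, h4, h5, h6, hc1, hc2⟩)
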